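/- arXiv:2102.00384 — 2 statements merged into one kernel-verified Lean document; each statement's English description precedes it below -/
import Mathlib

section
/- Fix π ∈ [−1,1] and constants α > 0, c > 0, ρ > 0. Let Ω be a finite index set with probability weights {p_ω}, let Θ: Ω → [−1,1], and for each ω let μ_ω be a probability measure on [−1,1] with mean Θ(ω). Define Risk(Z) = Σ_ω p_ω ∫ |y − π| · |sgn(Z(ω)) − sgn(y − π)| dμ_ω(y) and MAE(Θ₁,Θ₂) = Σ_ω p_ω |Θ₁(ω) − Θ₂(ω)|. Assume Σ_{ω: |Θ(ω)−π| ≤ t} p_ω ≤ c·t^α for all 0 ≤ t < ρ. Then for Θ̄ = sgn(Θ − π), every Z: Ω → ℝ, and every t with 0 ≤ t < ρ, Risk(Z) − Risk(Θ̄) ≥ t·( MAE(sgn Z, sgn Θ̄) − 2c·t^α ). -/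
open MeasureTheory

/-- The sign function: `sgn y = 1` if `y ≥ 0` and `-1` otherwise. -/
noncomputable def sgn (y : ℝ) : ℝ := if 0 ≤ y then 1 else -1

/-- The weighted classification risk at level `π`:
`Risk(Z) = Σ_ω p_ω ∫ |y − π| · |sgn(Z(ω)) − sgn(y − π)| dμ_ω(y)`. -/
noncomputable def Risk {I : Type*} [Fintype I] (p : I → ℝ) (μ : I → Measure ℝ)
    (π : ℝ) (Z : I → ℝ) : ℝ :=
  ∑ ω, p ω * ∫ y, |y - π| * |sgn (Z ω) - sgn (y - π)| ∂(μ ω)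

/-- The mean absolute error `MAE(Θ₁,Θ₂) = Σ_ω p_ω |Θ₁(ω) − Θ₂(ω)|`. -/
noncomputable def MAE {I : Type*} [Fintype I] (p : I → ℝ) (A B : I → ℝ) : ℝ :=
  ∑ ω, p ω * |A ω - B ω|

lemma sgn_mem (y : ℝ) : sgn y = 1 ∨ sgn y = -1 := by
  unfold sgn; split_ifs <;> simp

lemma sgn_sgn (y : ℝ) : sgn (sgn y) = sgn y := by
  rcases sgn_mem y with h | h <;> rw [h] <;> unfold sgn <;> norm_num

lemma sgn_mul_abs (x : ℝ) : sgn x * |x| = x := by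
  unfold sgn; split_ifs with h
  · rw [abs_of_nonneg h]; ring
  · rw [abs_of_neg (not_le.mp h)]; ring

lemma measurable_sgn : Measurable sgn :=
  Measurable.ite measurableSet_Ici measurable_const measurable_const

lemma ae_mem_Icc (μ : Measure ℝ) (hsupp : μ (Set.Icc (-1 : ℝ) 1)ᶜ = 0) :
    ∀ᵐ y ∂μ, y ∈ Set.Icc (-1 : ℝ) 1 := by
  rw [MeasureTheory.ae_iff]
  simpa [Set.compl_def] using hsupp

lemma integrable_aux (π s : ℝ) (μ : Measure ℝ) [IsProbabilityMeasure μ]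
    (hsupp : μ (Set.Icc (-1 : ℝ) 1)ᶜ = 0) :
    Integrable (fun y => |y - π| * |s - sgn (y - π)|) μ := by
  apply Integrable.mono' (integrable_const ((1 + |π|) * (|s| + 1)))
  · exact (((measurable_id.sub measurable_const).abs).mul
      ((measurable_const.sub (measurable_sgn.comp (measurable_id.sub measurable_const))).abs)).aestronglyMeasurable
  · filter_upwards [ae_mem_Icc μ hsupp] with y hy
    have hy1 : |y| ≤ 1 := abs_le.mpr ⟨hy.1, hy.2⟩
    have h1 : |y - π| ≤ 1 + |π| := by
      calc |y - π| ≤ |y| + |π| := abs_sub y π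
        _ ≤ 1 + |π| := by linarith
    have hsg : |sgn (y - π)| = 1 := by
      rcases sgn_mem (y - π) with h | h <;> rw [h] <;> norm_num
    have h2 : |s - sgn (y - π)| ≤ |s| + 1 := by
      calc |s - sgn (y - π)| ≤ |s| + |sgn (y - π)| := abs_sub _ _
        _ = |s| + 1 := by rw [hsg]
    have hn1 : (0:ℝ) ≤ |y - π| := abs_nonneg _
    have hn2 : (0:ℝ) ≤ |s - sgn (y - π)| := abs_nonneg _
    rw [Real.norm_eq_abs, abs_of_nonneg (mul_nonneg hn1 hn2)]
    exact mul_le_mul h1 h2 hn2 (by positivity)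

lemma integrable_id' (μ : Measure ℝ) [IsProbabilityMeasure μ]
    (hsupp : μ (Set.Icc (-1 : ℝ) 1)ᶜ = 0) :
    Integrable (fun y : ℝ => y) μ := by
  apply Integrable.mono' (integrable_const (1 : ℝ))
  · exact measurable_id.aestronglyMeasurable
  · filter_upwards [ae_mem_Icc μ hsupp] with y hy
    rw [Real.norm_eq_abs]
    exact abs_le.mpr ⟨hy.1, hy.2⟩

lemma diff_eq (s s' x : ℝ) (hs : s = 1 ∨ s = -1) (hs' : s' = 1 ∨ s' = -1) :
    |x| * |s - sgn x| - |x| * |s' - sgn x| = (s' - s) * x := by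
  have h := sgn_mul_abs x
  rcases sgn_mem x with h1 | h1 <;> rw [h1] at h <;>
    rcases hs with rfl | rfl <;> rcases hs' with rfl | rfl <;>
    rw [h1] <;> norm_num <;> linarith

lemma integral_diff (π : ℝ) (μ : Measure ℝ) [IsProbabilityMeasure μ]
    (hsupp : μ (Set.Icc (-1 : ℝ) 1)ᶜ = 0) (s s' : ℝ)
    (hs : s = 1 ∨ s = -1) (hs' : s' = 1 ∨ s' = -1) :
    (∫ y, |y - π| * |s - sgn (y - π)| ∂μ) - (∫ y, |y - π| * |s' - sgn (y - π)| ∂μ)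
      = (s' - s) * ((∫ y, y ∂μ) - π) := by
  rw [← integral_sub (integrable_aux π s μ hsupp) (integrable_aux π s' μ hsupp)]
  have hpt : ∀ y : ℝ, |y - π| * |s - sgn (y - π)| - |y - π| * |s' - sgn (y - π)|
      = (s' - s) * (y - π) := fun y => diff_eq s s' (y - π) hs hs'
  simp_rw [hpt]
  rw [MeasureTheory.integral_const_mul, integral_sub (integrable_id' μ hsupp) (integrable_const π),
    integral_const]
  simp

/-- under `α`-smoothness at level `π`, for `Θ̄ = sgn(Θ − π)`, every tensor
`Z` and every `0 ≤ t < ρ`,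
`Risk(Z) − Risk(Θ̄) ≥ t·(MAE(sgn Z, sgn Θ̄) − 2c·t^α)`. -/
theorem stmt6 {Ω : Type*} [Fintype Ω] (π : ℝ) (hπ : π ∈ Set.Icc (-1 : ℝ) 1)
    (α c ρ : ℝ) (hα : 0 < α) (hc : 0 < c) (hρ : 0 < ρ)
    (p : Ω → ℝ) (hp0 : ∀ ω, 0 ≤ p ω) (hp1 : ∑ ω, p ω = 1)
    (Θ : Ω → ℝ) (hΘ : ∀ ω, Θ ω ∈ Set.Icc (-1 : ℝ) 1)
    (μ : Ω → Measure ℝ)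
    (hμ : ∀ ω, IsProbabilityMeasure (μ ω))
    (hsupp : ∀ ω, μ ω (Set.Icc (-1 : ℝ) 1)ᶜ = 0)
    (hmean : ∀ ω, (∫ y, y ∂(μ ω)) = Θ ω)
    (hsmooth : ∀ t : ℝ, 0 ≤ t → t < ρ →
      (∑ ω ∈ Finset.univ.filter (fun ω => |Θ ω - π| ≤ t), p ω) ≤ c * t ^ α)
    (Z : Ω → ℝ) (t : ℝ) (ht0 : 0 ≤ t) (htρ : t < ρ) :
    t * (MAE p (fun ω => sgn (Z ω)) (fun ω => sgn (sgn (Θ ω - π))) - 2 * c * t ^ α)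
      ≤ Risk p μ π Z - Risk p μ π (fun ω => sgn (Θ ω - π)) := by
  set S : Ω → ℝ := fun ω => sgn (Z ω) with hS
  set S' : Ω → ℝ := fun ω => sgn (Θ ω - π) with hS'
  have hRisk : Risk p μ π Z - Risk p μ π S'
      = ∑ ω, p ω * ((S' ω - S ω) * (Θ ω - π)) := by
    unfold Risk
    rw [← Finset.sum_sub_distrib]
    refine Finset.sum_congr rfl fun ω _ => ?_
    haveI := hμ ω
    rw [← mul_sub]
    congr 1
    simp only [hS, hS', sgn_sgn]
    rw [integral_diff π (μ ω) (hsupp ω) (sgn (Z ω)) (sgn (Θ ω - π))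
      (sgn_mem _) (sgn_mem _), hmean ω]
  have hMAE : MAE p (fun ω => sgn (Z ω)) (fun ω => sgn (sgn (Θ ω - π)))
      = ∑ ω, p ω * |S ω - S' ω| := by
    unfold MAE
    simp only [hS, hS', sgn_sgn]
  rw [hRisk, hMAE]
  have hkey : ∀ ω ∈ Finset.univ, t * (p ω * |S ω - S' ω|)
      ≤ p ω * ((S' ω - S ω) * (Θ ω - π)) + 2 * t * (if |Θ ω - π| ≤ t then p ω else 0) := by
    intro ω _
    have hx := sgn_mul_abs (Θ ω - π)
    have hpω := hp0 ω
    have habs : (0:ℝ) ≤ |Θ ω - π| := abs_nonneg _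
    rcases sgn_mem (Z ω) with h1 | h1 <;> rcases sgn_mem (Θ ω - π) with h2 | h2 <;>
      rw [h2] at hx <;> simp only [hS, hS', h1, h2] <;> split_ifs with h <;>
      first
        | (norm_num <;> nlinarith [habs, mul_nonneg hpω habs, hx, mul_nonneg ht0 hpω])
        | (push_neg at h; norm_num <;>
            nlinarith [habs, mul_nonneg hpω habs, hx, mul_nonneg ht0 hpω])
  have hfil : (∑ ω, (if |Θ ω - π| ≤ t then p ω else 0)) ≤ c * t ^ α := by
    rw [← Finset.sum_filter]
    exact hsmooth t ht0 htρ
  have h1 : t * (∑ ω, p ω * |S ω - S' ω|)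
      ≤ (∑ ω, p ω * ((S' ω - S ω) * (Θ ω - π)))
        + 2 * t * (∑ ω, (if |Θ ω - π| ≤ t then p ω else 0)) := by
    rw [Finset.mul_sum, Finset.mul_sum, ← Finset.sum_add_distrib]
    exact Finset.sum_le_sum hkey
  have h2 : 2 * t * (∑ ω, (if |Θ ω - π| ≤ t then p ω else 0)) ≤ 2 * t * (c * t ^ α) :=
    mul_le_mul_of_nonneg_left hfil (by linarith)
  nlinarith [h1, h2]
end

section
/- Let d ≥ 1 and let I be the d×d identity matrix. Then for every π ∈ ℝ there exists a d×d real matrix B with matrix rank at most 3 such that sgn(B(i,j)) = sgn(I(i,j) − π) for all i,j ∈ {1,…,d}; that is, srank(I − π) ≤ 3 for all π ∈ ℝ. In particular, for the rank-2 matrix A with entries A(i,j) = 2^{−d−1}(2^{j−i} + 2^{i−j}), the matrix (2^{−d} + 2^{−d−3})·J − A (J the all-ones matrix) has entrywise sign pattern equal to 2I − J. -/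
lemma sgn_of_nonneg {y : ℝ} (h : 0 ≤ y) : sgn y = 1 := if_pos h

lemma sgn_of_neg {y : ℝ} (h : y < 0) : sgn y = -1 := if_neg (not_le.mpr h)

/-- Any matrix that factors through `Fin 3` has rank at most 3. -/
lemma rank_mul_le_three {d : ℕ} (X : Matrix (Fin d) (Fin 3) ℝ) (Y : Matrix (Fin 3) (Fin d) ℝ) :
    (X * Y).rank ≤ 3 := by
  refine (Matrix.rank_mul_le_left X Y).trans ?_
  simpa using X.rank_le_card_width

/-- the key inequality: `x + 1/x > 9/4` when `x = 2^m`, `m ≠ 0`. -/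
lemma key_ineq {m : ℤ} (hm : m ≠ 0) :
    (9 / 4 : ℝ) < (2 : ℝ) ^ m + (2 : ℝ) ^ (-m) := by
  set x : ℝ := (2 : ℝ) ^ m with hx
  have hxpos : 0 < x := zpow_pos (by norm_num) _
  have hinv : (2 : ℝ) ^ (-m) = 1 / x := by
    rw [zpow_neg, one_div]
  rw [hinv]
  have hfac : 0 ≤ (x - 2) * (x - 1 / 2) := by
    rcases hm.lt_or_gt with h | h
    · have h1 : m ≤ -1 := by omega
      have : x ≤ (2 : ℝ) ^ (-1 : ℤ) := by
        rw [hx]; exact zpow_le_zpow_right₀ (by norm_num) h1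
      have hxle : x ≤ 1 / 2 := by simpa [zpow_neg] using this
      nlinarith
    · have h1 : (1 : ℤ) ≤ m := h
      have : (2 : ℝ) ^ (1 : ℤ) ≤ x := by
        rw [hx]; exact zpow_le_zpow_right₀ (by norm_num) h1
      have hxge : 2 ≤ x := by simpa using this
      nlinarith
  have hxinv : x * (1 / x) = 1 := by field_simp
  nlinarith [mul_pos hxpos hxpos]

/-- key sign computation. -/
lemma key_sign (d : ℕ) (m : ℤ) :
    (m = 0 → 0 ≤ ((2 : ℝ) ^ (-(d : ℤ)) + (2 : ℝ) ^ (-(d : ℤ) - 3))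
      - (2 : ℝ) ^ (-(d : ℤ) - 1) * ((2 : ℝ) ^ m + (2 : ℝ) ^ (-m))) ∧
    (m ≠ 0 → ((2 : ℝ) ^ (-(d : ℤ)) + (2 : ℝ) ^ (-(d : ℤ) - 3))
      - (2 : ℝ) ^ (-(d : ℤ) - 1) * ((2 : ℝ) ^ m + (2 : ℝ) ^ (-m)) < 0) := by
  have h2 : (2 : ℝ) ≠ 0 := by norm_num
  set t : ℝ := (2 : ℝ) ^ (-(d : ℤ)) with ht
  have htpos : 0 < t := zpow_pos (by norm_num) _
  have h3 : (2 : ℝ) ^ (-(d : ℤ) - 3) = t / 8 := by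
    rw [sub_eq_add_neg, zpow_add₀ h2, ht]; norm_num; ring
  have h1 : (2 : ℝ) ^ (-(d : ℤ) - 1) = t / 2 := by
    rw [sub_eq_add_neg, zpow_add₀ h2, ht]; norm_num; ring
  constructor
  · rintro rfl
    rw [h3, h1]; norm_num
    nlinarith
  · intro hm
    have := key_ineq hm
    rw [h3, h1]
    nlinarith

/-- the identity matrix has `srank(I − π) ≤ 3` for every `π ∈ ℝ`; in
particular, for the rank-2 matrix `A(i,j) = 2^{−d−1}(2^{j−i} + 2^{i−j})`, the matrix
`(2^{−d} + 2^{−d−3})·J − A` (with `J` all-ones) has sign pattern `2I − J`, i.e. sign `+1`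
on the diagonal and `−1` off the diagonal. -/
theorem stmt15 (d : ℕ) (hd : 1 ≤ d)
    (A : Matrix (Fin d) (Fin d) ℝ)
    (hA : ∀ i j : Fin d, A i j
      = (2 : ℝ) ^ (-(d : ℤ) - 1)
        * ((2 : ℝ) ^ ((j.val : ℤ) - (i.val : ℤ)) + (2 : ℝ) ^ ((i.val : ℤ) - (j.val : ℤ)))) :
    (∀ π : ℝ, ∃ B : Matrix (Fin d) (Fin d) ℝ, B.rank ≤ 3 ∧
      ∀ i j : Fin d, sgn (B i j) = sgn ((1 : Matrix (Fin d) (Fin d) ℝ) i j - π)) ∧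
    (∀ i j : Fin d,
      sgn (((2 : ℝ) ^ (-(d : ℤ)) + (2 : ℝ) ^ (-(d : ℤ) - 3)) - A i j)
        = if i = j then (1 : ℝ) else -1) := by
  have h2 : (2 : ℝ) ≠ 0 := by norm_num
  -- the sign computation for c - A i j
  have hsign : ∀ i j : Fin d,
      sgn (((2 : ℝ) ^ (-(d : ℤ)) + (2 : ℝ) ^ (-(d : ℤ) - 3)) - A i j)
        = if i = j then (1 : ℝ) else -1 := by
    intro i j
    rw [hA i j]
    have hm : ((i.val : ℤ) - (j.val : ℤ)) = -(((j.val : ℤ) - (i.val : ℤ))) := by ring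
    rw [hm]
    obtain ⟨hk1, hk2⟩ := key_sign d ((j.val : ℤ) - (i.val : ℤ))
    by_cases hij : i = j
    · subst hij
      rw [if_pos rfl]
      exact sgn_of_nonneg (hk1 (by ring))
    · rw [if_neg hij]
      refine sgn_of_neg (hk2 ?_)
      intro h
      apply hij
      have : (i.val : ℤ) = (j.val : ℤ) := by omega
      exact Fin.ext (by exact_mod_cast this)
  refine ⟨?_, hsign⟩
  intro π
  by_cases hπ0 : π ≤ 0
  · -- all signs are +1 : take the all-ones matrix
    refine ⟨Matrix.of (fun (_ : Fin d) (_ : Fin 3) => (1 : ℝ)) *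
        Matrix.of (fun (_ : Fin 3) (_ : Fin d) => (1 : ℝ)/3),
      rank_mul_le_three _ _, ?_⟩
    intro i j
    have hB : (Matrix.of (fun (_ : Fin d) (_ : Fin 3) => (1 : ℝ)) *
        Matrix.of (fun (_ : Fin 3) (_ : Fin d) => (1 : ℝ)/3)) i j = 1 := by
      simp [Matrix.mul_apply, Fin.sum_univ_three]
    have hone := Matrix.one_apply (i := i) (j := j) (α := ℝ)
    have hr : sgn ((1 : Matrix (Fin d) (Fin d) ℝ) i j - π) = 1 := by
      refine sgn_of_nonneg ?_
      rw [hone]; split_ifs <;> linarith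
    rw [hB, hr, sgn_of_nonneg (by norm_num : (0:ℝ) ≤ 1)]
  · push_neg at hπ0
    by_cases hπ1 : π ≤ 1
    · -- sign pattern is 2I - J : use the matrix c•J - A, presented as a product
      set c : ℝ := (2 : ℝ) ^ (-(d : ℤ)) + (2 : ℝ) ^ (-(d : ℤ) - 3) with hc
      set s : ℝ := (2 : ℝ) ^ (-(d : ℤ) - 1) with hs
      refine ⟨Matrix.of (fun (i : Fin d) (k : Fin 3) =>
          ![c, -s * (2:ℝ) ^ (-(i.val : ℤ)), -s * (2:ℝ) ^ ((i.val : ℤ))] k) *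
        Matrix.of (fun (k : Fin 3) (j : Fin d) =>
          ![(1:ℝ), (2:ℝ) ^ ((j.val : ℤ)), (2:ℝ) ^ (-(j.val : ℤ))] k),
        rank_mul_le_three _ _, ?_⟩
      intro i j
      have hB : (Matrix.of (fun (i : Fin d) (k : Fin 3) =>
          ![c, -s * (2:ℝ) ^ (-(i.val : ℤ)), -s * (2:ℝ) ^ ((i.val : ℤ))] k) *
        Matrix.of (fun (k : Fin 3) (j : Fin d) =>
          ![(1:ℝ), (2:ℝ) ^ ((j.val : ℤ)), (2:ℝ) ^ (-(j.val : ℤ))] k)) i j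
          = c - A i j := by
        rw [hA i j]
        simp only [Matrix.mul_apply, Fin.sum_univ_three, Matrix.of_apply,
          Matrix.cons_val_zero, Matrix.cons_val_one, Matrix.head_cons,
          Matrix.cons_val_two, Matrix.tail_cons]
        have e1 : (2:ℝ) ^ (-(i.val:ℤ)) * (2:ℝ) ^ ((j.val:ℤ)) = (2:ℝ) ^ ((j.val:ℤ) - (i.val:ℤ)) := by
          rw [← zpow_add₀ h2]; ring_nf
        have e2 : (2:ℝ) ^ ((i.val:ℤ)) * (2:ℝ) ^ (-(j.val:ℤ)) = (2:ℝ) ^ ((i.val:ℤ) - (j.val:ℤ)) := by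
          rw [← zpow_add₀ h2]; ring_nf
        rw [mul_assoc, mul_assoc, e1, e2]; ring
      have hone := Matrix.one_apply (i := i) (j := j) (α := ℝ)
      rw [hB, hsign i j]
      rcases eq_or_ne i j with rfl | hij
      · rw [if_pos rfl]
        have hr : sgn ((1 : Matrix (Fin d) (Fin d) ℝ) i i - π) = 1 := by
          refine sgn_of_nonneg ?_
          rw [Matrix.one_apply, if_pos rfl]; linarith
        rw [hr]
      · rw [if_neg hij]
        have hr : sgn ((1 : Matrix (Fin d) (Fin d) ℝ) i j - π) = -1 := by
          refine sgn_of_neg ?_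
          rw [hone, if_neg hij]; linarith
        rw [hr]
    · -- π > 1 : all signs -1
      push_neg at hπ1
      refine ⟨Matrix.of (fun (_ : Fin d) (_ : Fin 3) => (-1 : ℝ)) *
          Matrix.of (fun (_ : Fin 3) (_ : Fin d) => (1 : ℝ)/3),
        rank_mul_le_three _ _, ?_⟩
      intro i j
      have hB : (Matrix.of (fun (_ : Fin d) (_ : Fin 3) => (-1 : ℝ)) *
          Matrix.of (fun (_ : Fin 3) (_ : Fin d) => (1 : ℝ)/3)) i j = -1 := by
        simp [Matrix.mul_apply, Fin.sum_univ_three]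
      have hone := Matrix.one_apply (i := i) (j := j) (α := ℝ)
      have hr : sgn ((1 : Matrix (Fin d) (Fin d) ℝ) i j - π) = -1 := by
        refine sgn_of_neg ?_
        rw [hone]; split_ifs <;> linarith
      rw [hB, hr, sgn_of_neg (by norm_num : (-1:ℝ) < 0)]
end
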